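/- arXiv:1809.03711 — 3 statements merged into one kernel-verified Lean document; each statement's English description precedes it below -/
import Mathlib

section
/- Let q be an odd prime, n = q+1, and ε = e^{2πi/(q+1)}, X₁ = (ε^q, ε^{q-1}, …, ε, 1) ∈ ℂ^{q+1}. Then the elementary symmetric polynomial P_{q+1} does not belong to the subalgebra of ℂ[x₁,…,x_{q+1}] generated by P₂, P₃, …, P_q. In particular, P_{q+1} evaluated at X₁ is nonzero while every element of the subalgebra generated by P₂,…,P_q with zero constant term vanishes at X₁. -/
open Complex MvPolynomial

theorem stmt_8 (q : ℕ) (hq : q.Prime) (hodd : Odd q)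
    (ε : ℂ) (hε : ε = Complex.exp (2 * Real.pi * Complex.I / (q + 1)))
    (X₁ : Fin (q + 1) → ℂ) (hX : ∀ i : Fin (q + 1), X₁ i = ε ^ (q - (i : ℕ))) :
    MvPolynomial.esymm (Fin (q + 1)) ℂ (q + 1) ∉
      Algebra.adjoin ℂ {P : MvPolynomial (Fin (q + 1)) ℂ |
        ∃ j, 2 ≤ j ∧ j ≤ q ∧ P = MvPolynomial.esymm (Fin (q + 1)) ℂ j} ∧
    MvPolynomial.eval X₁ (MvPolynomial.esymm (Fin (q + 1)) ℂ (q + 1)) ≠ 0 ∧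
    ∀ f ∈ Algebra.adjoin ℂ {P : MvPolynomial (Fin (q + 1)) ℂ |
        ∃ j, 2 ≤ j ∧ j ≤ q ∧ P = MvPolynomial.esymm (Fin (q + 1)) ℂ j},
      MvPolynomial.coeff 0 f = 0 → MvPolynomial.eval X₁ f = 0 := by
  have hn : 0 < q + 1 := Nat.succ_pos q
  -- ε is a primitive (q+1)-th root of unity
  have hprim : IsPrimitiveRoot ε (q + 1) := by
    have := Complex.isPrimitiveRoot_exp (q + 1) hn.ne'
    rw [hε]
    convert this using 3
    push_cast
    ring
  -- the factorization of X^(q+1) - 1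
  have hfact : ∏ i ∈ Finset.range (q + 1), (Polynomial.X + Polynomial.C (ε ^ i))
      = Polynomial.X ^ (q + 1) - 1 := by
    have he : (-1 : ℂ) ^ (q + 1) = 1 := by
      rcases hodd with ⟨k, hk⟩
      subst hk
      rw [show 2 * k + 1 + 1 = 2 * (k + 1) by ring, pow_mul]
      norm_num
    have h2 := X_pow_sub_C_eq_prod hprim hn he
    rw [Polynomial.C_1] at h2
    rw [h2]
    apply Finset.prod_congr rfl
    intro i _
    rw [mul_neg_one, map_neg, sub_neg_eq_add]
  -- evaluation of esymm j at X₁ equals a coefficient of X^(q+1) - 1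
  have heval : ∀ j : ℕ, j ≤ q + 1 →
      MvPolynomial.eval X₁ (MvPolynomial.esymm (Fin (q + 1)) ℂ j)
        = (Polynomial.X ^ (q + 1) - 1 : Polynomial ℂ).coeff (q + 1 - j) := by
    intro j hj
    have hk : q + 1 - j ≤ Finset.univ.card (α := Fin (q + 1)) := by
      simp [Nat.sub_le]
    have hV := Finset.prod_X_add_C_coeff (Finset.univ : Finset (Fin (q + 1))) X₁ hk
    have hcard : (Finset.univ : Finset (Fin (q + 1))).card = q + 1 := by simp
    rw [hcard] at hV
    have hjj : q + 1 - (q + 1 - j) = j := Nat.sub_sub_self hj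
    rw [hjj] at hV
    have hP : (∏ i : Fin (q + 1), (Polynomial.X + Polynomial.C (X₁ i)))
        = Polynomial.X ^ (q + 1) - 1 := by
      rw [← hfact]
      simp only [hX]
      rw [Fin.prod_univ_eq_prod_range (fun i => Polynomial.X + Polynomial.C (ε ^ (q - i))) (q + 1)]
      rw [← Finset.prod_range_reflect (fun i => Polynomial.X + Polynomial.C (ε ^ i)) (q + 1)]
      simp
    rw [hP] at hV
    rw [hV]
    rw [MvPolynomial.esymm, map_sum]
    apply Finset.sum_congr rfl
    intro t _
    rw [map_prod]
    simp
  -- constant coefficients of esymm vanish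
  have hconst : ∀ j : ℕ, 1 ≤ j →
      MvPolynomial.coeff 0 (MvPolynomial.esymm (Fin (q + 1)) ℂ j) = 0 := by
    intro j hj
    rw [MvPolynomial.esymm]
    rw [show (MvPolynomial.coeff 0 : MvPolynomial (Fin (q+1)) ℂ → ℂ)
        = MvPolynomial.constantCoeff from rfl]
    rw [map_sum]
    apply Finset.sum_eq_zero
    intro t ht
    rw [Finset.mem_powersetCard] at ht
    obtain ⟨i, hi⟩ := Finset.card_pos.mp (by omega : 0 < t.card)
    rw [map_prod]
    exact Finset.prod_eq_zero hi (by simp)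
  -- eval of esymm (q+1) is -1
  have hval : MvPolynomial.eval X₁ (MvPolynomial.esymm (Fin (q + 1)) ℂ (q + 1)) = -1 := by
    rw [heval (q + 1) le_rfl]
    simp [Polynomial.coeff_one]
  -- third bullet
  have hthird : ∀ f ∈ Algebra.adjoin ℂ {P : MvPolynomial (Fin (q + 1)) ℂ |
        ∃ j, 2 ≤ j ∧ j ≤ q ∧ P = MvPolynomial.esymm (Fin (q + 1)) ℂ j},
      MvPolynomial.coeff 0 f = 0 → MvPolynomial.eval X₁ f = 0 := by
    have key : ∀ f ∈ Algebra.adjoin ℂ {P : MvPolynomial (Fin (q + 1)) ℂ |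
        ∃ j, 2 ≤ j ∧ j ≤ q ∧ P = MvPolynomial.esymm (Fin (q + 1)) ℂ j},
        MvPolynomial.eval X₁ f = MvPolynomial.coeff 0 f := by
      intro f hf
      induction hf using Algebra.adjoin_induction with
      | mem x hx =>
        obtain ⟨j, hj2, hjq, rfl⟩ := hx
        rw [heval j (by omega), hconst j (by omega)]
        have h1 : 1 ≤ q + 1 - j := by omega
        have h2 : q + 1 - j ≤ q := by omega
        simp only [Polynomial.coeff_sub, Polynomial.coeff_X_pow, Polynomial.coeff_one]
        rw [if_neg (by omega), if_neg (by omega)]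
        ring
      | algebraMap r => simp [MvPolynomial.algebraMap_eq]
      | add x y hx hy ihx ihy => simp [ihx, ihy]
      | mul x y hx hy ihx ihy =>
        rw [map_mul, ihx, ihy]
        rw [show (MvPolynomial.coeff 0 : MvPolynomial (Fin (q+1)) ℂ → ℂ)
            = MvPolynomial.constantCoeff from rfl, map_mul]
    intro f hf hc
    rw [key f hf, hc]
  refine ⟨?_, ?_, hthird⟩
  · intro hmem
    have := hthird _ hmem (hconst (q + 1) (by omega))
    rw [hval] at this
    norm_num at this
  · rw [hval]; norm_num
end

section
/- Let n ≥ 2 and ε = e^{2πi/n}. Any polynomial with zero constant term in the elementary symmetric polynomials P₂, …, P_{n-1} (in n variables) vanishes at X₁ = (ε^{n-1}, …, ε, 1); hence P_n does not lie in the ℂ-subalgebra generated by P₂, …, P_{n-1}. -/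
open Complex MvPolynomial

theorem stmt_9 (n : ℕ) (hn : 2 ≤ n) (ε : ℂ)
    (hε : ε = Complex.exp (2 * Real.pi * Complex.I / n))
    (X₁ : Fin n → ℂ) (hX : ∀ i : Fin n, X₁ i = ε ^ (n - 1 - (i : ℕ))) :
    (∀ f ∈ Algebra.adjoin ℂ {P : MvPolynomial (Fin n) ℂ |
        ∃ j, 2 ≤ j ∧ j ≤ n - 1 ∧ P = MvPolynomial.esymm (Fin n) ℂ j},
      MvPolynomial.coeff 0 f = 0 → MvPolynomial.eval X₁ f = 0) ∧
    MvPolynomial.esymm (Fin n) ℂ n ∉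
      Algebra.adjoin ℂ {P : MvPolynomial (Fin n) ℂ |
        ∃ j, 2 ≤ j ∧ j ≤ n - 1 ∧ P = MvPolynomial.esymm (Fin n) ℂ j} := by
  have hn0 : 0 < n := by omega
  have hprim : IsPrimitiveRoot ε n := by
    rw [hε]; exact Complex.isPrimitiveRoot_exp n (by omega)
  have heval : ∀ f : MvPolynomial (Fin n) ℂ, MvPolynomial.eval X₁ f = MvPolynomial.aeval X₁ f := by
    intro f
    rw [aeval_def, MvPolynomial.eval, Algebra.algebraMap_self]
    rfl
  have hinj : Function.Injective X₁ := by
    intro i j hij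
    rw [hX i, hX j] at hij
    have hi := i.isLt; have hj := j.isLt
    have := hprim.pow_inj (by omega : n - 1 - (i : ℕ) < n) (by omega : n - 1 - (j : ℕ) < n) hij
    exact Fin.ext (by omega)
  have himg : Finset.image X₁ Finset.univ = Polynomial.nthRootsFinset n (1 : ℂ) := by
    apply Finset.eq_of_subset_of_card_le
    · intro x hx
      simp only [Finset.mem_image] at hx
      obtain ⟨i, -, rfl⟩ := hx
      rw [Polynomial.mem_nthRootsFinset hn0, hX i, ← pow_mul, mul_comm, pow_mul,
        hprim.pow_eq_one, one_pow]
    · rw [hprim.card_nthRootsFinset, Finset.card_image_of_injective _ hinj, Finset.card_univ,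
        Fintype.card_fin]
  have hprod : (∏ i : Fin n, (Polynomial.X - Polynomial.C (X₁ i))) =
      Polynomial.X ^ n - 1 := by
    rw [Polynomial.X_pow_sub_one_eq_prod hn0 hprim, ← himg,
      Finset.prod_image (fun a _ b _ h => hinj h)]
  have hesymm : ∀ j, 1 ≤ j → j ≤ n - 1 →
      MvPolynomial.eval X₁ (MvPolynomial.esymm (Fin n) ℂ j) = 0 := by
    intro j hj1 hj2
    rw [heval, aeval_esymm_eq_multiset_esymm]
    have hcard : Multiset.card (Finset.univ.val.map X₁) = n := by
      simp
    have hcoeff := Multiset.prod_X_sub_C_coeff (Finset.univ.val.map X₁)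
      (k := n - j) (by rw [hcard]; omega)
    rw [hcard] at hcoeff
    have hnj : n - (n - j) = j := by omega
    rw [hnj] at hcoeff
    have hpe : ((Finset.univ.val.map X₁).map fun t => Polynomial.X - Polynomial.C t).prod =
        Polynomial.X ^ n - 1 := by
      rw [← hprod, Multiset.map_map]
      rfl
    rw [hpe] at hcoeff
    have hz : (Polynomial.X ^ n - 1 : Polynomial ℂ).coeff (n - j) = 0 := by
      rw [Polynomial.coeff_sub, Polynomial.coeff_X_pow, Polynomial.coeff_one,
        if_neg (by omega : ¬ n - j = n), if_neg (by omega : ¬ n - j = 0)]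
      ring
    rw [hz] at hcoeff
    have := hcoeff.symm
    have hne : ((-1 : ℂ)) ^ j ≠ 0 := by
      exact pow_ne_zero _ (by norm_num)
    exact (mul_eq_zero.mp this).resolve_left hne
  have hcc : ∀ j, 1 ≤ j → MvPolynomial.coeff 0 (MvPolynomial.esymm (Fin n) ℂ j) = 0 := by
    intro j hj1
    have : MvPolynomial.aeval (0 : Fin n → ℂ) (MvPolynomial.esymm (Fin n) ℂ j) = 0 := by
      rw [aeval_esymm_eq_multiset_esymm, Finset.esymm_map_val]
      apply Finset.sum_eq_zero
      intro t ht
      have htc : t.card = j := (Finset.mem_powersetCard.mp ht).2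
      have : t.Nonempty := Finset.card_pos.mp (by omega)
      obtain ⟨a, ha⟩ := this
      exact Finset.prod_eq_zero ha rfl
    rwa [aeval_zero, Algebra.algebraMap_self, RingHom.id_apply, constantCoeff_eq] at this
  -- the two algebra homs agree on the adjoined set
  have key : ∀ f ∈ Algebra.adjoin ℂ {P : MvPolynomial (Fin n) ℂ |
      ∃ j, 2 ≤ j ∧ j ≤ n - 1 ∧ P = MvPolynomial.esymm (Fin n) ℂ j},
      MvPolynomial.eval X₁ f = MvPolynomial.coeff 0 f := by
    intro f hf
    induction hf using Algebra.adjoin_induction with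
    | mem x hx =>
      obtain ⟨j, hj2, hjn, rfl⟩ := hx
      rw [hesymm j (by omega) hjn, hcc j (by omega)]
    | algebraMap r =>
      simp [← constantCoeff_eq]
    | add x y hx hy ihx ihy =>
      simp [map_add, ← constantCoeff_eq] at *
      rw [ihx, ihy]
    | mul x y hx hy ihx ihy =>
      simp only [map_mul, ← constantCoeff_eq] at *
      rw [ihx, ihy]
  constructor
  · intro f hf h0
    rw [key f hf, h0]
  · intro hmem
    have h1 := key _ hmem
    rw [hcc n (by omega)] at h1
    have h2 : MvPolynomial.eval X₁ (MvPolynomial.esymm (Fin n) ℂ n) = ∏ i : Fin n, X₁ i := by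
      rw [heval, aeval_esymm_eq_multiset_esymm, Finset.esymm_map_val]
      have hps := Finset.powersetCard_self (Finset.univ : Finset (Fin n))
      rw [show (Finset.univ : Finset (Fin n)).card = n by simp] at hps
      rw [hps, Finset.sum_singleton]
    rw [h2] at h1
    have : ∀ i : Fin n, X₁ i ≠ 0 := by
      intro i
      rw [hX i]
      apply pow_ne_zero
      intro h
      exact (hprim.ne_zero (by omega)) h
    exact Finset.prod_ne_zero_iff.mpr (fun i _ => this i) h1
end

section
/- Let ε = e^{2πi/12} and X₁ = (ε^{11}, ε^{10}, …, ε, 1) ∈ ℂ^{12}. Then P₅(X₁) = 0, P₂(X₁) = 0, and P₃(X₁) = 0; moreover there exists a permutation w of the 12 coordinates such that w(X₁) has zero coordinate-sum on each of the three blocks {1,…,4}, {5,…,8}, {9,…,12}, and the restriction p₅ of P₅ to the subspace of ℂ^{12} of vectors with zero sum on each of these blocks does not lie in the subalgebra generated by the restrictions p₂ and p₃. -/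
open Complex MvPolynomial

/-- Membership in the complexified Cartan subalgebra of su(4)×su(4)×su(4) ⊂ su(12):
zero coordinate-sum on each of the blocks {1,…,4}, {5,…,8}, {9,…,12}. -/
def blockTraceZero (x : Fin 12 → ℂ) : Prop :=
  ∀ b : Fin 3, ∑ i : Fin 4, x ⟨(b : ℕ) * 4 + (i : ℕ), by omega⟩ = 0

/-- The restriction of the j-th elementary symmetric polynomial (in 12 variables)
to the block-trace-zero subspace, as a function. -/
noncomputable def pRes (j : ℕ) : {x : Fin 12 → ℂ // blockTraceZero x} → ℂ :=
  fun x => MvPolynomial.eval x.1 (MvPolynomial.esymm (Fin 12) ℂ j)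

lemma eval_esymm_eq_coeff (v : Fin 12 → ℂ) (j : ℕ) (hj : j ≤ 12) :
    MvPolynomial.eval v (MvPolynomial.esymm (Fin 12) ℂ j) =
      (-1)^j * (∏ i : Fin 12, (Polynomial.X - Polynomial.C (v i))).coeff (12 - j) := by
  have hcard : Multiset.card (Finset.univ.val.map v) = 12 := by simp
  have h1 : MvPolynomial.eval v (MvPolynomial.esymm (Fin 12) ℂ j)
      = (Finset.univ.val.map v).esymm j := by
    rw [MvPolynomial.esymm, Finset.esymm_map_val, map_sum]
    simp [MvPolynomial.eval_prod]
  have h2 := Multiset.prod_X_sub_C_coeff (Finset.univ.val.map v)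
    (show 12 - j ≤ Multiset.card (Finset.univ.val.map v) by omega)
  rw [hcard] at h2
  have h3 : 12 - (12 - j) = j := by omega
  rw [h3] at h2
  have h4 : ((Finset.univ.val.map v).map fun t => Polynomial.X - Polynomial.C t).prod
      = ∏ i : Fin 12, (Polynomial.X - Polynomial.C (v i)) := by
    rw [Multiset.map_map, Finset.prod_eq_multiset_prod]
    rfl
  rw [h4] at h2
  rw [h1, h2, ← mul_assoc, ← mul_pow]
  simp

lemma quart' {R : Type*} [CommRing R] (x a b : R) (h : b^2 = -(a^2)) :
    (x - a) * (x - b) * (x + a) * (x + b) = x^4 - a^4 := by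
  linear_combination (a^2 - x^2) * h

lemma trip' {R : Type*} [CommRing R] (x u : R) (h : u^2 + u + 1 = 0) :
    (x^4 - 1) * (x^4 - u) * (x^4 - u^2) = x^12 - 1 := by
  linear_combination (-(x^8) + u * x^4 - u + 1) * h

lemma prodX₁ (ε : ℂ) (h6 : ε^6 = -1) (hg : ε^8 + ε^4 + 1 = 0)
    (X₁ : Fin 12 → ℂ) (hX : ∀ i : Fin 12, X₁ i = ε ^ (11 - (i : ℕ))) :
    ∏ i : Fin 12, (Polynomial.X - Polynomial.C (X₁ i)) = Polynomial.X^12 - 1 := by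
  set c : Polynomial ℂ := Polynomial.C ε with hc
  have hc6 : c^6 = -1 := by rw [hc, ← map_pow, h6]; simp
  have hcg : c^8 + c^4 + 1 = 0 := by
    rw [hc, ← map_pow, ← map_pow]
    have := congrArg Polynomial.C hg
    simpa using this
  have step1 : ∏ i : Fin 12, (Polynomial.X - Polynomial.C (X₁ i))
      = ∏ n ∈ Finset.range 12, (Polynomial.X - Polynomial.C (ε ^ (11 - n))) := by
    rw [← Fin.prod_univ_eq_prod_range (fun n => Polynomial.X - Polynomial.C (ε ^ (11 - n))) 12]
    exact Finset.prod_congr rfl fun i _ => by rw [hX i]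
  rw [step1]
  simp only [Finset.prod_range_succ, Finset.prod_range_zero, one_mul]
  norm_num
  rw [← hc]
  calc (Polynomial.X - c^11) * (Polynomial.X - c^10) * (Polynomial.X - c^9) *
        (Polynomial.X - c^8) * (Polynomial.X - c^7) * (Polynomial.X - c^6) *
        (Polynomial.X - c^5) * (Polynomial.X - c^4) * (Polynomial.X - c^3) *
        (Polynomial.X - c^2) * (Polynomial.X - c) * (Polynomial.X - 1)
      = ((Polynomial.X - 1) * (Polynomial.X - c^3) * (Polynomial.X + 1) * (Polynomial.X + c^3)) *
        ((Polynomial.X - c) * (Polynomial.X - c^4) * (Polynomial.X + c) * (Polynomial.X + c^4)) *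
        ((Polynomial.X - c^2) * (Polynomial.X - c^5) * (Polynomial.X + c^2) * (Polynomial.X + c^5)) := by
        have h7 : c^7 = -c := by linear_combination c * hc6
        have h8 : c^8 = -(c^2) := by linear_combination c^2 * hc6
        have h9 : c^9 = -(c^3) := by linear_combination c^3 * hc6
        have h10 : c^10 = -(c^4) := by linear_combination c^4 * hc6
        have h11 : c^11 = -(c^5) := by linear_combination c^5 * hc6
        rw [hc6, h7, h8, h9, h10, h11]; ring
    _ = (Polynomial.X^4 - 1^4) * (Polynomial.X^4 - c^4) * (Polynomial.X^4 - (c^2)^4) := by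
        rw [quart' Polynomial.X 1 (c^3) (by linear_combination hc6),
          quart' Polynomial.X c (c^4) (by linear_combination c^2 * hc6),
          quart' Polynomial.X (c^2) (c^5) (by linear_combination c^4 * hc6)]
    _ = Polynomial.X^12 - 1 := by
        linear_combination trip' Polynomial.X (c^4) (by linear_combination hcg)

noncomputable def fx : ℕ → ℂ := fun n => if n = 0 then -4 else if n = 2 ∨ n = 3 then 2 else 0
noncomputable def fy : ℕ → ℂ := fun n => if n = 0 ∨ n = 4 then -3 else if n < 8 then 1 else 0

lemma prodx : ∏ i : Fin 12, (Polynomial.X - Polynomial.C (fx (i : ℕ)))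
    = Polynomial.X^12 - 12 * Polynomial.X^10 + 16 * Polynomial.X^9 := by
  rw [Fin.prod_univ_eq_prod_range (fun n => Polynomial.X - Polynomial.C (fx n)) 12]
  simp only [Finset.prod_range_succ, Finset.prod_range_zero, one_mul]
  norm_num [fx, map_ofNat]
  ring

lemma prody : ∏ i : Fin 12, (Polynomial.X - Polynomial.C (fy (i : ℕ)))
    = Polynomial.X^12 - 12 * Polynomial.X^10 + 16 * Polynomial.X^9 + 30 * Polynomial.X^8
      - 96 * Polynomial.X^7 + 100 * Polynomial.X^6 - 48 * Polynomial.X^5 + 9 * Polynomial.X^4 := by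
  rw [Fin.prod_univ_eq_prod_range (fun n => Polynomial.X - Polynomial.C (fy n)) 12]
  simp only [Finset.prod_range_succ, Finset.prod_range_zero, one_mul]
  norm_num [fy, map_ofNat]
  ring

lemma hbx : blockTraceZero (fun i => fx (i : ℕ)) := by
  intro b
  fin_cases b <;> simp [Fin.sum_univ_four, fx] <;> norm_num

lemma hby : blockTraceZero (fun i => fy (i : ℕ)) := by
  intro b
  fin_cases b <;> simp [Fin.sum_univ_four, fy] <;> norm_num

lemma evx2 : MvPolynomial.eval (fun i : Fin 12 => fx (i : ℕ)) (MvPolynomial.esymm (Fin 12) ℂ 2) = -12 := by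
  rw [eval_esymm_eq_coeff _ 2 (by norm_num)]
  norm_num [prodx]

lemma evx3 : MvPolynomial.eval (fun i : Fin 12 => fx (i : ℕ)) (MvPolynomial.esymm (Fin 12) ℂ 3) = -16 := by
  rw [eval_esymm_eq_coeff _ 3 (by norm_num)]
  norm_num [prodx]

lemma evx5 : MvPolynomial.eval (fun i : Fin 12 => fx (i : ℕ)) (MvPolynomial.esymm (Fin 12) ℂ 5) = 0 := by
  rw [eval_esymm_eq_coeff _ 5 (by norm_num)]
  norm_num [prodx]

lemma evy2 : MvPolynomial.eval (fun i : Fin 12 => fy (i : ℕ)) (MvPolynomial.esymm (Fin 12) ℂ 2) = -12 := by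
  rw [eval_esymm_eq_coeff _ 2 (by norm_num)]
  norm_num [prody]

lemma evy3 : MvPolynomial.eval (fun i : Fin 12 => fy (i : ℕ)) (MvPolynomial.esymm (Fin 12) ℂ 3) = -16 := by
  rw [eval_esymm_eq_coeff _ 3 (by norm_num)]
  norm_num [prody]

lemma evy5 : MvPolynomial.eval (fun i : Fin 12 => fy (i : ℕ)) (MvPolynomial.esymm (Fin 12) ℂ 5) = 96 := by
  rw [eval_esymm_eq_coeff _ 5 (by norm_num)]
  norm_num [prody]

theorem stmt_14 (ε : ℂ) (hε : ε = Complex.exp (2 * Real.pi * Complex.I / 12))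
    (X₁ : Fin 12 → ℂ) (hX : ∀ i : Fin 12, X₁ i = ε ^ (11 - (i : ℕ))) :
    MvPolynomial.eval X₁ (MvPolynomial.esymm (Fin 12) ℂ 5) = 0 ∧
    MvPolynomial.eval X₁ (MvPolynomial.esymm (Fin 12) ℂ 2) = 0 ∧
    MvPolynomial.eval X₁ (MvPolynomial.esymm (Fin 12) ℂ 3) = 0 ∧
    (∃ w : Equiv.Perm (Fin 12), blockTraceZero (fun i => X₁ (w i))) ∧
    pRes 5 ∉ Algebra.adjoin ℂ {pRes 2, pRes 3} := by
  -- basic facts about ε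
  have h6 : ε^6 = -1 := by
    rw [hε, ← Complex.exp_nat_mul]
    rw [show ((6 : ℕ) : ℂ) * (2 * (Real.pi : ℂ) * Complex.I / 12) = Real.pi * Complex.I by
      push_cast; ring]
    exact Complex.exp_pi_mul_I
  have hprim : IsPrimitiveRoot ε 12 := by
    rw [hε, show (2 * (Real.pi : ℂ) * Complex.I / 12)
      = 2 * (Real.pi : ℂ) * Complex.I / ((12 : ℕ) : ℂ) by norm_num]
    exact Complex.isPrimitiveRoot_exp 12 (by norm_num)
  have h12 : ε^12 = 1 := hprim.pow_eq_one
  have h4ne : ε^4 ≠ 1 := hprim.pow_ne_one_of_pos_of_lt (by norm_num) (by norm_num)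
  have hg : ε^8 + ε^4 + 1 = 0 := by
    have hfac : (ε^4 - 1) * (ε^8 + ε^4 + 1) = 0 := by linear_combination h12
    rcases mul_eq_zero.mp hfac with h | h
    · exact absurd (by linear_combination h) h4ne
    · exact h
  have hP := prodX₁ ε h6 hg X₁ hX
  refine ⟨?_, ?_, ?_, ?_, ?_⟩
  · rw [eval_esymm_eq_coeff _ 5 (by norm_num), hP]
    simp [Polynomial.coeff_X_pow, Polynomial.coeff_one]
  · rw [eval_esymm_eq_coeff _ 2 (by norm_num), hP]
    simp [Polynomial.coeff_X_pow, Polynomial.coeff_one]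
  · rw [eval_esymm_eq_coeff _ 3 (by norm_num), hP]
    simp [Polynomial.coeff_X_pow, Polynomial.coeff_one]
  · -- the permutation
    have hX' : ∀ (i : Fin 12) (m : ℕ), (i : ℕ) = m → X₁ i = ε ^ (11 - m) := by
      intro i m h
      rw [hX, h]
    have hsum : blockTraceZero (fun i => X₁ (⟨11 - 3 * ((i : ℕ) % 4) - (i : ℕ) / 4, by omega⟩ : Fin 12)) := by
      intro b
      fin_cases b
      · rw [Fin.sum_univ_four]
        show X₁ ⟨11, by omega⟩ + X₁ ⟨8, by omega⟩ + X₁ ⟨5, by omega⟩ + X₁ ⟨2, by omega⟩ = 0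
        rw [hX' _ 11 rfl, hX' _ 8 rfl, hX' _ 5 rfl, hX' _ 2 rfl]
        norm_num
        linear_combination (1 + ε^3) * h6
      · rw [Fin.sum_univ_four]
        show X₁ ⟨10, by omega⟩ + X₁ ⟨7, by omega⟩ + X₁ ⟨4, by omega⟩ + X₁ ⟨1, by omega⟩ = 0
        rw [hX' _ 10 rfl, hX' _ 7 rfl, hX' _ 4 rfl, hX' _ 1 rfl]
        norm_num
        linear_combination (ε + ε^4) * h6
      · rw [Fin.sum_univ_four]
        show X₁ ⟨9, by omega⟩ + X₁ ⟨6, by omega⟩ + X₁ ⟨3, by omega⟩ + X₁ ⟨0, by omega⟩ = 0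
        rw [hX' _ 9 rfl, hX' _ 6 rfl, hX' _ 3 rfl, hX' _ 0 rfl]
        norm_num
        linear_combination (ε^2 + ε^5) * h6
    exact ⟨⟨fun i => ⟨11 - 3 * ((i : ℕ) % 4) - (i : ℕ) / 4, by omega⟩,
      fun j => ⟨4 * ((11 - (j : ℕ)) % 3) + (11 - (j : ℕ)) / 3, by omega⟩,
      by decide, by decide⟩, hsum⟩
  · -- non-membership
    intro hmem
    have key : ∀ f, f ∈ Algebra.adjoin ℂ {pRes 2, pRes 3} →
        f ⟨fun i => fx (i : ℕ), hbx⟩ = f ⟨fun i => fy (i : ℕ), hby⟩ := by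
      intro f hf
      induction hf using Algebra.adjoin_induction with
      | mem g hg =>
        rcases hg with rfl | rfl
        · show pRes 2 _ = pRes 2 _
          simp only [pRes, evx2, evy2]
        · show pRes 3 _ = pRes 3 _
          simp only [pRes, evx3, evy3]
      | algebraMap r => rfl
      | add f g hf hg ihf ihg => simp [Pi.add_apply, ihf, ihg]
      | mul f g hf hg ihf ihg => simp [Pi.mul_apply, ihf, ihg]
    have key5 := key _ hmem
    have h1 : pRes 5 ⟨fun i => fx (i : ℕ), hbx⟩ = 0 := evx5
    have h2 : pRes 5 ⟨fun i => fy (i : ℕ), hby⟩ = 96 := evy5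
    rw [h1, h2] at key5
    norm_num at key5
end
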